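/- The Cartesian product of an arbitrary family of G_δ-complete topological groups is G_δ-complete. -/

import Mathlib

/-- The topology generated by the `G_δ`-subsets of `(G, t)`. -/
def gdeltaTopology {G : Type*} (t : TopologicalSpace G) : TopologicalSpace G :=
  TopologicalSpace.generateFrom
    {s : Set G | ∃ f : ℕ → Set G, (∀ n, @IsOpen G t (f n)) ∧ s = ⋂ n, f n}

/-- A topological group is Raïkov-complete if every filter which is Cauchy with
respect to the two-sided (upper) uniformity — i.e. admits arbitrarily small sets
for both the left and the right uniformity — converges. -/
def RaikovComplete (G : Type*) [Group G] [TopologicalSpace G] : Prop :=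
  ∀ F : Filter G, F.NeBot →
    (∀ U ∈ nhds (1 : G), ∃ S ∈ F, ∀ x ∈ S, ∀ y ∈ S, x * y⁻¹ ∈ U ∧ x⁻¹ * y ∈ U) →
    ∃ x : G, F ≤ nhds x

/-- A topological group `(G, t)` is `G_δ`-complete if `G` equipped with the topology
generated by `G_δ`-sets is Raïkov-complete. -/
def GDeltaComplete (G : Type*) [Group G] [t : TopologicalSpace G] : Prop :=
  @RaikovComplete G _ (gdeltaTopology t)

lemma gdeltaTopology_eq {G : Type*} (t : TopologicalSpace G) :
    gdeltaTopology t = TopologicalSpace.generateFrom {s : Set G | @IsGδ G t s} := by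
  unfold gdeltaTopology
  congr 1
  ext s
  simp only [Set.mem_setOf_eq]
  exact (@isGδ_iff_eq_iInter_nat G t s).symm

lemma mem_nhds_gdelta {G : Type*} {t : TopologicalSpace G} {x : G} {A : Set G} :
    A ∈ @nhds G (gdeltaTopology t) x ↔ ∃ s : Set G, @IsGδ G t s ∧ x ∈ s ∧ s ⊆ A := by
  rw [gdeltaTopology_eq, TopologicalSpace.nhds_generateFrom,
    Filter.mem_biInf_of_directed]
  · simp only [Set.mem_setOf_eq, Filter.mem_principal]
    constructor
    · rintro ⟨s, ⟨hx, hs⟩, hsA⟩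
      exact ⟨s, hs, hx, hsA⟩
    · rintro ⟨s, hs, hx, hsA⟩
      exact ⟨s, ⟨hx, hs⟩, hsA⟩
  · rintro s ⟨hxs, hs⟩ u ⟨hxu, hu⟩
    exact ⟨s ∩ u, ⟨⟨hxs, hxu⟩, hs.inter hu⟩,
      Filter.principal_mono.2 Set.inter_subset_left,
      Filter.principal_mono.2 Set.inter_subset_right⟩
  · exact ⟨Set.univ, Set.mem_univ x, @IsGδ.univ G t⟩

open Pointwise in
lemma isGdelta_preimage {X Y : Type*} [TopologicalSpace X] [TopologicalSpace Y]
    {s : Set Y} (hs : IsGδ s) {f : X → Y} (hf : Continuous f) : IsGδ (f ⁻¹' s) := by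
  obtain ⟨g, hg, rfl⟩ := hs.eq_iInter_nat
  rw [Set.preimage_iInter]
  exact IsGδ.iInter_of_isOpen fun n => (hg n).preimage hf

open Pointwise

/-- The Cartesian product of an arbitrary family of `G_δ`-complete
topological groups is `G_δ`-complete. -/
theorem stmt11 {ι : Type*} (G : ι → Type*) [∀ i, Group (G i)]
    [∀ i, TopologicalSpace (G i)] [∀ i, IsTopologicalGroup (G i)]
    (h : ∀ i, GDeltaComplete (G i)) :
    GDeltaComplete (∀ i, G i) := by
  intro F hne hC
  -- the coordinate filters are Cauchy, hence converge
  have hconv : ∀ i, ∃ xi : G i,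
      Filter.map (fun p : ∀ j, G j => p i) F ≤ @nhds (G i) (gdeltaTopology inferInstance) xi := by
    intro i
    refine h i _ (hne.map _) ?_
    intro U hU
    obtain ⟨B, hB, h1B, hBU⟩ := mem_nhds_gdelta.mp hU
    have hpre : ((fun p : ∀ j, G j => p i) ⁻¹' B) ∈
        @nhds (∀ j, G j) (gdeltaTopology inferInstance) 1 := by
      refine mem_nhds_gdelta.mpr ⟨_, isGdelta_preimage hB (continuous_apply i), h1B, le_refl _⟩
    obtain ⟨S, hS, hSp⟩ := hC _ hpre
    refine ⟨(fun p : ∀ j, G j => p i) '' S, Filter.image_mem_map hS, ?_⟩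
    rintro _ ⟨a, ha, rfl⟩ _ ⟨b, hb, rfl⟩
    obtain ⟨h1, h2⟩ := hSp a ha b hb
    exact ⟨hBU h1, hBU h2⟩
  choose x hx using hconv
  refine ⟨x, ?_⟩
  intro A hA
  obtain ⟨s, hs, hxs, hsA⟩ := mem_nhds_gdelta.mp hA
  obtain ⟨f, hfo, rfl⟩ := hs.eq_iInter_nat
  have hxf : ∀ n, x ∈ f n := fun n => Set.mem_iInter.mp hxs n
  -- for each n, find a basic open neighborhood inside f n
  have hbasic : ∀ n, ∃ (I : Finset ι) (u : ∀ j, Set (G j)),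
      (∀ j ∈ I, IsOpen (u j) ∧ x j ∈ u j) ∧ (I : Set ι).pi u ⊆ f n := by
    intro n
    exact isOpen_pi_iff.mp (hfo n) x (hxf n)
  choose I u hu hupi using hbasic
  -- shrink: open W n j ∋ 1 with x j * (W * W) ⊆ u n j
  classical
  have hW : ∀ n, ∀ j : ι, ∃ W : Set (G j), IsOpen W ∧ (1 : G j) ∈ W ∧
      (j ∈ I n → W * W ⊆ (x j)⁻¹ • u n j) := by
    intro n j
    by_cases hj : j ∈ I n
    · have h1 : (x j)⁻¹ • u n j ∈ nhds (1 : G j) := by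
        have : u n j ∈ nhds (x j) := (hu n j hj).1.mem_nhds (hu n j hj).2
        simpa using smul_mem_nhds_smul (x j)⁻¹ this
      obtain ⟨W, hWo, hW1, hWm⟩ := exists_open_nhds_one_mul_subset h1
      exact ⟨W, hWo, hW1, fun _ => hWm⟩
    · exact ⟨Set.univ, isOpen_univ, Set.mem_univ _, fun hj' => absurd hj' hj⟩
  choose W hWo hW1 hWmul using hW
  -- the Gδ neighborhood of 1 in the product
  set P : Set (∀ j, G j) := ⋂ n, ⋂ j ∈ I n, (fun p : ∀ k, G k => p j) ⁻¹' W n j with hP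
  have hPgd : @IsGδ (∀ j, G j) _ P := by
    refine IsGδ.iInter_of_isOpen fun n => ?_
    exact isOpen_biInter_finset fun j _ => (hWo n j).preimage (continuous_apply j)
  have h1P : (1 : ∀ j, G j) ∈ P := by
    simp only [hP, Set.mem_iInter, Set.mem_preimage]
    intro n j _
    exact hW1 n j
  have hPnhds : P ∈ @nhds (∀ j, G j) (gdeltaTopology inferInstance) 1 :=
    mem_nhds_gdelta.mpr ⟨P, hPgd, h1P, le_refl _⟩
  obtain ⟨S, hS, hSp⟩ := hC P hPnhds
  -- S is contained in each π_j⁻¹ (u n j) for j ∈ I n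
  have key : ∀ n, ∀ j ∈ I n, ∀ b ∈ S, b j ∈ u n j := by
    intro n j hj b hb
    -- find a ∈ S with a j ∈ x j • W n j
    have hnbhd : (fun p : ∀ k, G k => p j) ⁻¹' (x j • W n j) ∈ F := by
      apply hx j
      refine mem_nhds_gdelta.mpr ⟨x j • W n j, ?_, ?_, le_refl _⟩
      · exact ((hWo n j).smul (x j)).isGδ
      · exact ⟨1, hW1 n j, mul_one _⟩
    have hSne : (S ∩ (fun p : ∀ k, G k => p j) ⁻¹' (x j • W n j)).Nonempty :=
      Filter.nonempty_of_mem (Filter.inter_mem hS hnbhd)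
    obtain ⟨a, haS, haj⟩ := hSne
    simp only [Set.mem_preimage] at haj
    obtain ⟨w1, hw1, hw1e⟩ := haj
    have hab : a⁻¹ * b ∈ P := (hSp a haS b hb).2
    have habj : (a⁻¹ * b) j ∈ W n j := by
      simp only [hP, Set.mem_iInter, Set.mem_preimage] at hab
      exact hab n j hj
    have hmem : x j * (w1 * ((a j)⁻¹ * b j)) ∈ u n j := by
      have h2 : w1 * (a⁻¹ * b) j ∈ (x j)⁻¹ • u n j :=
        hWmul n j hj (Set.mul_mem_mul hw1 habj)
      rw [Set.mem_smul_set_iff_inv_smul_mem, inv_inv, smul_eq_mul] at h2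
      simpa [Pi.mul_apply, Pi.inv_apply] using h2
    have haeq : a j = x j * w1 := by
      rw [← hw1e]; simp [smul_eq_mul]
    have hbeq : b j = x j * (w1 * ((a j)⁻¹ * b j)) := by
      rw [haeq]; group
    rw [hbeq]
    exact hmem
  have hSsub : S ⊆ A := by
    intro b hb
    refine hsA (Set.mem_iInter.mpr fun n => hupi n ?_)
    intro j hj
    exact key n j hj b hb
  exact Filter.mem_of_superset hS hSsub
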